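/- Let m ≥ 1, let M, N ⊆ [m] with M ≠ ∅ and N ⊊ [m], and let D = aΔ_M + cΔ_N^c ⊆ E^m. Then the binary Gray image Φ(C^L_D) is an F₂-linear code of length 2^{|M|+1}(2^m−2^{|N|}), with 2^{2|M|} codewords (F₂-dimension 2|M|), and minimum nonzero Hamming weight 2^{|M|−1}(2^m−2^{|N|}). Moreover, if |M|+|N| ≥ 3, then Φ(C^L_D) is self-orthogonal. -/

import Mathlib

open Finset

/-- The simplicial complex `Δ_M ⊆ 𝔽₂^m` generated by `M ⊆ [m]`:
all vectors whose support is contained in `M`. -/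
def deltaC {m : ℕ} (M : Finset (Fin m)) : Finset (Fin m → ZMod 2) :=
  Finset.univ.filter (fun w => ∀ i, w i ≠ 0 → i ∈ M)

/-- Dot product over `𝔽₂`. -/
def dotp {m : ℕ} (x y : Fin m → ZMod 2) : ZMod 2 := ∑ i, x i * y i

/-- The Gray map on a single element `a·s + c·t ↔ (s, t)` of `E = 𝔽₂ × 𝔽₂`:
`Φ(as + ct) = (t, s + t)`. -/
def grayPair (e : ZMod 2 × ZMod 2) : Fin 2 → ZMod 2 := ![e.2, e.1 + e.2]

/-- The left codeword `c^L_D(v)` for `v = aα + cβ ↔ (α, β)`: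
its coordinate at `d = (t₁, t₂) ∈ D` is `a(α·t₁) + c(β·t₁) ↔ (α·t₁, β·t₁)`. -/
def cwL {m : ℕ} (Ds : Finset ((Fin m → ZMod 2) × (Fin m → ZMod 2)))
    (v : (Fin m → ZMod 2) × (Fin m → ZMod 2)) :
    {d // d ∈ Ds} → ZMod 2 × ZMod 2 :=
  fun d => (dotp v.1 d.1.1, dotp v.2 d.1.1)

/-- The Gray image `Φ(c^L_D(v)) ∈ 𝔽₂^{2|D|}` of the left codeword `c^L_D(v)`;
its Hamming weight (`hammingNorm`) is the Lee weight of `c^L_D(v)`. -/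
def gcwL {m : ℕ} (Ds : Finset ((Fin m → ZMod 2) × (Fin m → ZMod 2)))
    (v : (Fin m → ZMod 2) × (Fin m → ZMod 2)) :
    {d // d ∈ Ds} × Fin 2 → ZMod 2 :=
  fun x => grayPair (cwL Ds v x.1) x.2

/-- The right codeword `c^R_D(v)` for `v = aα + cβ ↔ (α, β)`:
its coordinate at `d = (t₁, t₂) ∈ D` is `a(t₁·α) + c(t₂·α) ↔ (t₁·α, t₂·α)`. -/
def cwR {m : ℕ} (Ds : Finset ((Fin m → ZMod 2) × (Fin m → ZMod 2)))
    (v : (Fin m → ZMod 2) × (Fin m → ZMod 2)) :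
    {d // d ∈ Ds} → ZMod 2 × ZMod 2 :=
  fun d => (dotp d.1.1 v.1, dotp d.1.2 v.1)

/-- The Gray image `Φ(c^R_D(v)) ∈ 𝔽₂^{2|D|}` of the right codeword `c^R_D(v)`;
its Hamming weight (`hammingNorm`) is the Lee weight of `c^R_D(v)`. -/
def gcwR {m : ℕ} (Ds : Finset ((Fin m → ZMod 2) × (Fin m → ZMod 2)))
    (v : (Fin m → ZMod 2) × (Fin m → ZMod 2)) :
    {d // d ∈ Ds} × Fin 2 → ZMod 2 :=
  fun x => grayPair (cwR Ds v x.1) x.2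


/-! ### Auxiliary lemmas -/

lemma zmod2_eq_one {x : ZMod 2} (h : x ≠ 0) : x = 1 := by revert h; revert x; decide

lemma mem_deltaC {m : ℕ} {M : Finset (Fin m)} {w : Fin m → ZMod 2} :
    w ∈ deltaC M ↔ ∀ i, w i ≠ 0 → i ∈ M := by simp [deltaC]

/-- extension by zero -/
def extM {m : ℕ} (M : Finset (Fin m)) (u : {i // i ∈ M} → ZMod 2) : Fin m → ZMod 2 :=
  fun i => if h : i ∈ M then u ⟨i, h⟩ else 0

lemma extM_injective {m : ℕ} (M : Finset (Fin m)) : Function.Injective (extM M) := by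
  intro u u' h
  funext i
  have := congrFun h i.1
  simpa [extM, i.2] using this

lemma deltaC_eq_image {m : ℕ} (M : Finset (Fin m)) :
    deltaC M = Finset.univ.image (extM M) := by
  ext w
  simp only [mem_deltaC, Finset.mem_image, Finset.mem_univ, true_and]
  constructor
  · intro hw
    refine ⟨fun i => w i.1, ?_⟩
    funext i
    by_cases h : i ∈ M
    · simp [extM, h]
    · simp only [extM, h, dif_neg, not_false_iff]
      by_contra h0
      exact h (hw i (Ne.symm h0))
  · rintro ⟨u, rfl⟩ i hi
    by_contra h
    simp [extM, h] at hi

lemma card_deltaC {m : ℕ} (M : Finset (Fin m)) : (deltaC M).card = 2 ^ M.card := by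
  rw [deltaC_eq_image, Finset.card_image_of_injective _ (extM_injective M),
    Finset.card_univ, Fintype.card_fun]
  simp [Fintype.card_coe]

lemma dotp_eq_zero {m : ℕ} {M : Finset (Fin m)} {γ t : Fin m → ZMod 2}
    (ht : t ∈ deltaC M) (hγ : ∀ i ∈ M, γ i = 0) : dotp γ t = 0 := by
  rw [mem_deltaC] at ht
  apply Finset.sum_eq_zero
  intro i _
  by_cases h : i ∈ M
  · rw [hγ i h, zero_mul]
  · have : t i = 0 := by by_contra h0; exact h (ht i h0)
    rw [this, mul_zero]

lemma dotp_add_left {m : ℕ} (x y t : Fin m → ZMod 2) :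
    dotp (x + y) t = dotp x t + dotp y t := by
  simp [dotp, add_mul, Finset.sum_add_distrib]

/-- the indicator vector of `{i}` -/
def eVec {m : ℕ} (i : Fin m) : Fin m → ZMod 2 := fun j => if j = i then 1 else 0

lemma dotp_eVec {m : ℕ} (γ : Fin m → ZMod 2) (i : Fin m) : dotp γ (eVec i) = γ i := by
  simp [dotp, eVec, mul_ite, Finset.sum_ite_eq']

lemma dotp_add_right {m : ℕ} (γ t s : Fin m → ZMod 2) :
    dotp γ (t + s) = dotp γ t + dotp γ s := by
  simp [dotp, mul_add, Finset.sum_add_distrib]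

lemma eVec_mem {m : ℕ} {M : Finset (Fin m)} {i : Fin m} (hi : i ∈ M) : eVec i ∈ deltaC M := by
  rw [mem_deltaC]
  intro j hj
  by_cases h : j = i
  · subst h; exact hi
  · simp [eVec, h] at hj

lemma add_eVec_mem {m : ℕ} {M : Finset (Fin m)} {i : Fin m} (hi : i ∈ M)
    {t : Fin m → ZMod 2} (ht : t ∈ deltaC M) : t + eVec i ∈ deltaC M := by
  rw [mem_deltaC] at ht ⊢
  intro j hj
  by_cases h : j = i
  · subst h; exact hi
  · apply ht
    simpa [eVec, h] using hj

/-- Halving lemma: if `γ` is nonzero somewhere on `M`, exactly half of `Δ_M`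
has `dotp γ t ≠ 0`. -/
lemma card_filter_dotp {m : ℕ} {M : Finset (Fin m)} {γ : Fin m → ZMod 2}
    {i : Fin m} (hi : i ∈ M) (hγ : γ i ≠ 0) :
    ((deltaC M).filter (fun t => dotp γ t ≠ 0)).card = 2 ^ (M.card - 1) := by
  have hγ1 : γ i = 1 := zmod2_eq_one hγ
  have key : ∀ t : Fin m → ZMod 2, dotp γ (t + eVec i) = dotp γ t + 1 := by
    intro t; rw [dotp_add_right, dotp_eVec, hγ1]
  have hinv : ∀ t : Fin m → ZMod 2, t + eVec i + eVec i = t := by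
    have h2 : ∀ x : ZMod 2, x + 1 + 1 = x := by decide
    intro t; funext j
    by_cases h : j = i <;> simp [eVec, h, h2]
  have hswap : ∀ x : ZMod 2, x ≠ 0 ↔ ¬ (x + 1 ≠ 0) := by decide
  have hcard : ((deltaC M).filter (fun t => dotp γ t ≠ 0)).card
      = ((deltaC M).filter (fun t => ¬ dotp γ t ≠ 0)).card := by
    apply Finset.card_bij' (fun t _ => t + eVec i) (fun t _ => t + eVec i)
    · intro t ht
      rw [Finset.mem_filter] at ht ⊢
      refine ⟨add_eVec_mem hi ht.1, ?_⟩
      rw [key]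
      have := (hswap (dotp γ t)).mp ht.2
      simpa using this
    · intro t ht
      rw [Finset.mem_filter] at ht ⊢
      refine ⟨add_eVec_mem hi ht.1, ?_⟩
      rw [key, not_not.mp ht.2]
      simp
    · intro t _; exact hinv t
    · intro t _; exact hinv t
  have htot := Finset.card_filter_add_card_filter_not
    (s := deltaC M) (p := fun t => dotp γ t ≠ 0)
  have hd : (deltaC M).card = 2 ^ M.card := card_deltaC M
  have hMpos : 1 ≤ M.card := Finset.card_pos.mpr ⟨i, hi⟩
  have h2 : 2 ^ M.card = 2 ^ (M.card - 1) + 2 ^ (M.card - 1) := by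
    have h1 : M.card - 1 + 1 = M.card := by omega
    conv_lhs => rw [← h1]
    rw [pow_succ]; ring
  omega

def chiV {m : ℕ} (i j : Fin m) : Fin m → ZMod 2 := fun k => if k = i ∨ k = j then 1 else 0

lemma card_filter_pair {m : ℕ} {M : Finset (Fin m)} {i j : Fin m}
    (hi : i ∈ M) (hj : j ∈ M) :
    ((deltaC M).filter (fun t => t i = 1 ∧ t j = 1)).card = 2 ^ (M \ {i, j}).card := by
  have h11 : (1 : ZMod 2) + 1 = 0 := by decide
  have h11' : ∀ x : ZMod 2, x + 1 + 1 = x := by decide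
  rw [← card_deltaC (M \ {i, j})]
  apply Finset.card_bij' (fun t _ => t + chiV i j) (fun s _ => s + chiV i j)
  · intro t ht
    rw [Finset.mem_filter] at ht
    obtain ⟨htM, hti, htj⟩ := ht
    rw [mem_deltaC] at htM ⊢
    intro k hk
    rcases eq_or_ne k i with rfl | hki
    · exfalso; apply hk; simp [chiV, hti, h11]
    rcases eq_or_ne k j with rfl | hkj
    · exfalso; apply hk; simp [chiV, htj, h11]
    have hk0 : t k ≠ 0 := by simpa [chiV, hki, hkj] using hk
    simp [Finset.mem_sdiff, htM k hk0, hki, hkj]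
  · intro s hs
    rw [mem_deltaC] at hs
    have hsi : s i = 0 := by
      by_contra h; have := hs i h; simp [Finset.mem_sdiff] at this
    have hsj : s j = 0 := by
      by_contra h; have := hs j h; simp [Finset.mem_sdiff] at this
    rw [Finset.mem_filter, mem_deltaC]
    refine ⟨?_, by simp [chiV, hsi], by simp [chiV, hsj]⟩
    intro k hk
    rcases eq_or_ne k i with rfl | hki
    · exact hi
    rcases eq_or_ne k j with rfl | hkj
    · exact hj
    have hk0 : s k ≠ 0 := by simpa [chiV, hki, hkj] using hk
    exact (Finset.mem_sdiff.mp (hs k hk0)).1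
  · intro t _
    funext k
    by_cases h : k = i ∨ k = j <;> simp [chiV, h, h11']
  · intro s _
    funext k
    by_cases h : k = i ∨ k = j <;> simp [chiV, h, h11']

lemma sum_ti_tj {m : ℕ} {M : Finset (Fin m)} (h3 : 3 ≤ M.card) (i j : Fin m) :
    ∑ t ∈ deltaC M, t i * t j = (0 : ZMod 2) := by
  by_cases hi : i ∈ M
  · by_cases hj : j ∈ M
    · have conv1 : ∀ x y : ZMod 2, x * y = if x = 1 ∧ y = 1 then 1 else 0 := by decide
      calc ∑ t ∈ deltaC M, t i * t j
          = ∑ t ∈ deltaC M, if t i = 1 ∧ t j = 1 then 1 else 0 := by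
            exact Finset.sum_congr rfl fun t _ => conv1 _ _
        _ = (((deltaC M).filter (fun t => t i = 1 ∧ t j = 1)).card : ZMod 2) :=
            Finset.sum_boole _ _
        _ = ((2 ^ (M \ {i, j}).card : ℕ) : ZMod 2) := by rw [card_filter_pair hi hj]
        _ = 0 := by
            rw [ZMod.natCast_eq_zero_iff]
            apply dvd_pow_self
            have h2 : ({i, j} : Finset (Fin m)).card ≤ 2 :=
              le_trans (Finset.card_insert_le _ _) (by simp)
            have := Finset.le_card_sdiff ({i, j} : Finset (Fin m)) M
            omega
    · apply Finset.sum_eq_zero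
      intro t ht
      have : t j = 0 := by
        by_contra h; exact hj ((mem_deltaC.mp ht) j h)
      rw [this, mul_zero]
  · apply Finset.sum_eq_zero
    intro t ht
    have : t i = 0 := by
      by_contra h; exact hi ((mem_deltaC.mp ht) i h)
    rw [this, zero_mul]

lemma sum_dotp_mul {m : ℕ} {M : Finset (Fin m)} (h3 : 3 ≤ M.card) (γ δ : Fin m → ZMod 2) :
    ∑ t ∈ deltaC M, dotp γ t * dotp δ t = 0 := by
  have expand : ∀ t, dotp γ t * dotp δ t
      = ∑ i : Fin m, ∑ j : Fin m, γ i * δ j * (t i * t j) := by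
    intro t
    rw [dotp, dotp, Finset.sum_mul_sum]
    apply Finset.sum_congr rfl; intro i _
    apply Finset.sum_congr rfl; intro j _
    ring
  rw [Finset.sum_congr rfl fun t _ => expand t]
  rw [Finset.sum_comm]
  apply Finset.sum_eq_zero; intro i _
  rw [Finset.sum_comm]
  apply Finset.sum_eq_zero; intro j _
  rw [← Finset.mul_sum, sum_ti_tj h3, mul_zero]

lemma gcwL_apply0 {m : ℕ} (Ds : Finset ((Fin m → ZMod 2) × (Fin m → ZMod 2)))
    (v : (Fin m → ZMod 2) × (Fin m → ZMod 2)) (d : {d // d ∈ Ds}) :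
    gcwL Ds v (d, 0) = dotp v.2 d.1.1 := rfl

lemma gcwL_apply1 {m : ℕ} (Ds : Finset ((Fin m → ZMod 2) × (Fin m → ZMod 2)))
    (v : (Fin m → ZMod 2) × (Fin m → ZMod 2)) (d : {d // d ∈ Ds}) :
    gcwL Ds v (d, 1) = dotp v.1 d.1.1 + dotp v.2 d.1.1 := rfl

lemma weight_formula {m : ℕ} (M N : Finset (Fin m))
    (Ds : Finset ((Fin m → ZMod 2) × (Fin m → ZMod 2)))
    (hDs : Ds = deltaC M ×ˢ (deltaC N)ᶜ)
    (v : (Fin m → ZMod 2) × (Fin m → ZMod 2)) :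
    hammingNorm (gcwL Ds v) = ((deltaC N)ᶜ).card *
      (((deltaC M).filter (fun t => dotp v.2 t ≠ 0)).card
        + ((deltaC M).filter (fun t => dotp v.1 t + dotp v.2 t ≠ 0)).card) := by
  have h1 : hammingNorm (gcwL Ds v)
      = ∑ x : {d // d ∈ Ds} × Fin 2, if gcwL Ds v x ≠ 0 then 1 else 0 := by
    rw [hammingNorm, Finset.card_filter]
  rw [h1, Fintype.sum_prod_type]
  have h2 : ∀ d : {d // d ∈ Ds},
      (∑ k : Fin 2, if gcwL Ds v (d, k) ≠ 0 then 1 else 0)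
      = ((if dotp v.2 d.1.1 ≠ 0 then 1 else 0)
        + (if dotp v.1 d.1.1 + dotp v.2 d.1.1 ≠ 0 then 1 else 0) : ℕ) := by
    intro d
    rw [Fin.sum_univ_two, gcwL_apply0, gcwL_apply1]
  rw [Finset.sum_congr rfl fun d _ => h2 d]
  rw [Finset.sum_coe_sort Ds (fun d => (if dotp v.2 d.1 ≠ 0 then 1 else 0)
        + (if dotp v.1 d.1 + dotp v.2 d.1 ≠ 0 then 1 else 0))]
  rw [hDs, Finset.sum_product]
  dsimp only
  rw [Finset.sum_congr rfl (fun t _ => (Finset.sum_const (s := (deltaC N)ᶜ) ((if dotp v.2 t ≠ 0 then 1 else 0) + (if dotp v.1 t + dotp v.2 t ≠ 0 then 1 else 0) : ℕ)))]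
  simp only [smul_eq_mul]
  rw [← Finset.mul_sum]
  congr 1
  rw [Finset.sum_add_distrib]
  congr 1
  · exact Finset.sum_boole _ _
  · exact Finset.sum_boole _ _

lemma inner_formula {m : ℕ} (M N : Finset (Fin m))
    (Ds : Finset ((Fin m → ZMod 2) × (Fin m → ZMod 2)))
    (hDs : Ds = deltaC M ×ˢ (deltaC N)ᶜ)
    (v w : (Fin m → ZMod 2) × (Fin m → ZMod 2)) :
    ∑ x, gcwL Ds v x * gcwL Ds w x
      = (((deltaC N)ᶜ).card : ZMod 2) *
        ∑ t ∈ deltaC M, (dotp v.2 t * dotp w.2 t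
          + (dotp v.1 t + dotp v.2 t) * (dotp w.1 t + dotp w.2 t)) := by
  rw [Fintype.sum_prod_type]
  have h2 : ∀ d : {d // d ∈ Ds},
      (∑ k : Fin 2, gcwL Ds v (d, k) * gcwL Ds w (d, k))
      = dotp v.2 d.1.1 * dotp w.2 d.1.1
        + (dotp v.1 d.1.1 + dotp v.2 d.1.1) * (dotp w.1 d.1.1 + dotp w.2 d.1.1) := by
    intro d
    rw [Fin.sum_univ_two, gcwL_apply0, gcwL_apply1, gcwL_apply0, gcwL_apply1]
  rw [Finset.sum_congr rfl fun d _ => h2 d]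
  rw [Finset.sum_coe_sort Ds (fun d => dotp v.2 d.1 * dotp w.2 d.1
        + (dotp v.1 d.1 + dotp v.2 d.1) * (dotp w.1 d.1 + dotp w.2 d.1))]
  rw [hDs, Finset.sum_product]
  dsimp only
  rw [Finset.sum_congr rfl (fun t _ => Finset.sum_const _)]
  simp only [nsmul_eq_mul]
  rw [← Finset.mul_sum]

lemma dotp_extM {m : ℕ} (M : Finset (Fin m)) (α : Fin m → ZMod 2)
    {t : Fin m → ZMod 2} (ht : t ∈ deltaC M) :
    dotp (extM M (fun i => α i.1)) t = dotp α t := by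
  apply Finset.sum_congr rfl
  intro i _
  by_cases h : i ∈ M
  · simp [extM, h]
  · have : t i = 0 := by by_contra h0; exact h (mem_deltaC.mp ht i h0)
    simp [this]

lemma ext_pair {α : Type*} {f g : α × Fin 2 → ZMod 2}
    (h0 : ∀ d, f (d, 0) = g (d, 0)) (h1 : ∀ d, f (d, 1) = g (d, 1)) : f = g := by
  funext x
  obtain ⟨d, k⟩ := x
  fin_cases k
  · exact h0 d
  · exact h1 d

theorem stmt_7 {m : ℕ} (hm : 1 ≤ m) (M N : Finset (Fin m))
    (hM : M ≠ ∅) (hNu : N ≠ Finset.univ)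
    (Ds : Finset ((Fin m → ZMod 2) × (Fin m → ZMod 2)))
    (hDs : Ds = deltaC M ×ˢ (deltaC N)ᶜ) :
    (2 * Ds.card = 2 ^ (M.card + 1) * (2 ^ m - 2 ^ N.card)) ∧
    ((Finset.univ : Finset ((Fin m → ZMod 2) × (Fin m → ZMod 2))).image (gcwL Ds)).card = 2 ^ (2 * M.card) ∧
    (∀ v w : (Fin m → ZMod 2) × (Fin m → ZMod 2), ∃ z : (Fin m → ZMod 2) × (Fin m → ZMod 2), gcwL Ds z = gcwL Ds v + gcwL Ds w) ∧
    (∀ v : (Fin m → ZMod 2) × (Fin m → ZMod 2), gcwL Ds v ≠ 0 → 2 ^ (M.card - 1) * (2 ^ m - 2 ^ N.card) ≤ hammingNorm (gcwL Ds v)) ∧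
    (∃ v : (Fin m → ZMod 2) × (Fin m → ZMod 2), gcwL Ds v ≠ 0 ∧ hammingNorm (gcwL Ds v) = 2 ^ (M.card - 1) * (2 ^ m - 2 ^ N.card)) ∧
    (3 ≤ M.card + N.card →
      ∀ v w : (Fin m → ZMod 2) × (Fin m → ZMod 2), ∑ i, gcwL Ds v i * gcwL Ds w i = 0) := by
  -- basic cardinalities
  have hfun : Fintype.card (Fin m → ZMod 2) = 2 ^ m := by
    rw [Fintype.card_fun, ZMod.card, Fintype.card_fin]
  have hK : ((deltaC N)ᶜ).card = 2 ^ m - 2 ^ N.card := by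
    rw [Finset.card_compl, card_deltaC, hfun]
  have hNlt : N.card < m := by
    have h1 : N ⊂ Finset.univ := Finset.ssubset_univ_iff.mpr hNu
    have := Finset.card_lt_card h1
    simpa [Finset.card_univ, Fintype.card_fin] using this
  have hKpos : 0 < 2 ^ m - 2 ^ N.card := by
    have : (2 : ℕ) ^ N.card < 2 ^ m := Nat.pow_lt_pow_right one_lt_two hNlt
    omega
  obtain ⟨i₀, hi₀⟩ : M.Nonempty := Finset.nonempty_iff_ne_empty.mpr hM
  obtain ⟨t₂, ht₂⟩ : ((deltaC N)ᶜ).Nonempty := Finset.card_pos.mp (by omega)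
  -- membership of d.1 in deltaC M for d : subtype
  have hdM : ∀ d : {d // d ∈ Ds}, d.1.1 ∈ deltaC M := by
    intro d
    have hd : d.1 ∈ deltaC M ×ˢ (deltaC N)ᶜ := by rw [← hDs]; exact d.2
    exact (Finset.mem_product.mp hd).1
  refine ⟨?_, ?_, ?_, ?_, ?_, ?_⟩
  -- (1) length
  · rw [hDs, Finset.card_product, card_deltaC, hK, pow_succ]
    ring
  -- (2) number of codewords
  · classical
    set F : (({i // i ∈ M} → ZMod 2) × ({i // i ∈ M} → ZMod 2)) → ({d // d ∈ Ds} × Fin 2 → ZMod 2) :=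
      fun u => gcwL Ds (extM M u.1, extM M u.2) with hF
    have himg : (Finset.univ.image (gcwL Ds)) = Finset.univ.image F := by
      apply Finset.Subset.antisymm
      · intro y hy
        rw [Finset.mem_image] at hy ⊢
        obtain ⟨v, _, rfl⟩ := hy
        refine ⟨(fun i => v.1 i.1, fun i => v.2 i.1), Finset.mem_univ _, ?_⟩
        have hFv : F (fun i => v.1 i.1, fun i => v.2 i.1)
            = gcwL Ds (extM M (fun i => v.1 i.1), extM M (fun i => v.2 i.1)) := rfl
        rw [hFv]
        apply ext_pair
        · intro d
          rw [gcwL_apply0, gcwL_apply0]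
          exact dotp_extM M v.2 (hdM d)
        · intro d
          rw [gcwL_apply1, gcwL_apply1, dotp_extM M v.1 (hdM d), dotp_extM M v.2 (hdM d)]
      · intro y hy
        rw [Finset.mem_image] at hy ⊢
        obtain ⟨u, _, rfl⟩ := hy
        exact ⟨(extM M u.1, extM M u.2), Finset.mem_univ _, rfl⟩
    have hinj : Function.Injective F := by
      intro u u' h
      have key : ∀ i : {i // i ∈ M}, u.1 i = u'.1 i ∧ u.2 i = u'.2 i := by
        intro i
        have hd₀ : (eVec i.1, t₂) ∈ Ds := by
          rw [hDs, Finset.mem_product]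
          exact ⟨eVec_mem i.2, ht₂⟩
        have h0 := congrFun h (⟨(eVec i.1, t₂), hd₀⟩, 0)
        have h1 := congrFun h (⟨(eVec i.1, t₂), hd₀⟩, 1)
        simp only [hF] at h0 h1
        rw [gcwL_apply0, gcwL_apply0, dotp_eVec, dotp_eVec] at h0
        rw [gcwL_apply1, gcwL_apply1, dotp_eVec, dotp_eVec, dotp_eVec, dotp_eVec] at h1
        simp only [extM, i.2, dif_pos] at h0 h1
        refine ⟨?_, h0⟩
        rw [h0] at h1
        exact add_right_cancel h1
      have h1 : u.1 = u'.1 := funext fun i => (key i).1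
      have h2 : u.2 = u'.2 := funext fun i => (key i).2
      exact Prod.ext h1 h2
    rw [himg, Finset.card_image_of_injective _ hinj, Finset.card_univ,
      Fintype.card_prod, Fintype.card_fun, ZMod.card, Fintype.card_coe,
      ← pow_add, two_mul]
  -- (3) linearity
  · intro v w
    refine ⟨v + w, ext_pair (fun d => ?_) (fun d => ?_)⟩
    · have hP : (gcwL Ds v + gcwL Ds w) (d, 0) = gcwL Ds v (d, 0) + gcwL Ds w (d, 0) := rfl
      rw [hP, gcwL_apply0, gcwL_apply0, gcwL_apply0, Prod.snd_add, dotp_add_left]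
    · have hP : (gcwL Ds v + gcwL Ds w) (d, 1) = gcwL Ds v (d, 1) + gcwL Ds w (d, 1) := rfl
      rw [hP, gcwL_apply1, gcwL_apply1, gcwL_apply1, Prod.fst_add, Prod.snd_add,
        dotp_add_left, dotp_add_left]
      ring
  -- (4) minimum distance lower bound
  · intro v hv
    rw [weight_formula M N Ds hDs v, hK]
    by_cases hβ : ∃ i ∈ M, v.2 i ≠ 0
    · obtain ⟨i, hiM, hvi⟩ := hβ
      rw [card_filter_dotp hiM hvi]
      calc 2 ^ (M.card - 1) * (2 ^ m - 2 ^ N.card)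
          = (2 ^ m - 2 ^ N.card) * 2 ^ (M.card - 1) := mul_comm _ _
        _ ≤ (2 ^ m - 2 ^ N.card) * (2 ^ (M.card - 1)
              + ((deltaC M).filter (fun t => dotp v.1 t + dotp v.2 t ≠ 0)).card) :=
            Nat.mul_le_mul_left _ (Nat.le_add_right _ _)
    · by_cases hαβ : ∃ i ∈ M, v.1 i + v.2 i ≠ 0
      · obtain ⟨i, hiM, hvi⟩ := hαβ
        have hfe : ((deltaC M).filter (fun t => dotp v.1 t + dotp v.2 t ≠ 0))
            = ((deltaC M).filter (fun t => dotp (v.1 + v.2) t ≠ 0)) := by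
          apply Finset.filter_congr
          intro t _
          rw [dotp_add_left]
        rw [hfe, card_filter_dotp hiM (show (v.1 + v.2) i ≠ 0 from hvi)]
        calc 2 ^ (M.card - 1) * (2 ^ m - 2 ^ N.card)
            = (2 ^ m - 2 ^ N.card) * 2 ^ (M.card - 1) := mul_comm _ _
          _ ≤ (2 ^ m - 2 ^ N.card) * (((deltaC M).filter (fun t => dotp v.2 t ≠ 0)).card
                + 2 ^ (M.card - 1)) :=
              Nat.mul_le_mul_left _ (Nat.le_add_left _ _)
      · exfalso
        apply hv
        push_neg at hβ hαβ
        apply ext_pair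
        · intro d
          rw [gcwL_apply0]
          exact dotp_eq_zero (hdM d) hβ
        · intro d
          rw [gcwL_apply1, ← dotp_add_left]
          exact dotp_eq_zero (hdM d) hαβ
  -- (5) minimum distance achieved
  · refine ⟨(eVec i₀, 0), ?_, ?_⟩
    · intro h
      have hd₀ : (eVec i₀, t₂) ∈ Ds := by
        rw [hDs, Finset.mem_product]
        exact ⟨eVec_mem hi₀, ht₂⟩
      have h1 := congrFun h (⟨(eVec i₀, t₂), hd₀⟩, 1)
      rw [gcwL_apply1, dotp_eVec, dotp_eVec] at h1
      have : (1 : ZMod 2) = 0 := by simpa [eVec] using h1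
      exact one_ne_zero this
    · rw [weight_formula M N Ds hDs _, hK]
      have hc1 : ((deltaC M).filter
          (fun t => dotp ((eVec i₀, (0 : Fin m → ZMod 2))).2 t ≠ 0)) = ∅ := by
        apply Finset.filter_false_of_mem
        intro t _
        simp [dotp]
      have hc2 : ((deltaC M).filter
          (fun t => dotp ((eVec i₀, (0 : Fin m → ZMod 2))).1 t
            + dotp ((eVec i₀, (0 : Fin m → ZMod 2))).2 t ≠ 0)).card = 2 ^ (M.card - 1) := by
        have hfe : ((deltaC M).filter
            (fun t => dotp (eVec i₀) t + dotp (0 : Fin m → ZMod 2) t ≠ 0))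
            = ((deltaC M).filter (fun t => dotp (eVec i₀) t ≠ 0)) := by
          apply Finset.filter_congr
          intro t _
          have : dotp (0 : Fin m → ZMod 2) t = 0 := by simp [dotp]
          rw [this, add_zero]
        rw [hfe]
        exact card_filter_dotp hi₀ (show eVec i₀ i₀ ≠ 0 by simp [eVec])
      rw [hc1, hc2]
      simp [mul_comm]
  -- (6) self-orthogonality
  · intro h3 v w
    rw [inner_formula M N Ds hDs v w]
    by_cases hN : N = ∅
    · have hM3 : 3 ≤ M.card := by
        have : N.card = 0 := by simp [hN]
        omega
      have hz : ∑ t ∈ deltaC M, (dotp v.2 t * dotp w.2 t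
          + (dotp v.1 t + dotp v.2 t) * (dotp w.1 t + dotp w.2 t)) = 0 := by
        rw [Finset.sum_add_distrib]
        have e1 := sum_dotp_mul hM3 v.2 w.2
        have e2 := sum_dotp_mul hM3 (v.1 + v.2) (w.1 + w.2)
        rw [e1]
        have hfe : ∀ t ∈ deltaC M, (dotp v.1 t + dotp v.2 t) * (dotp w.1 t + dotp w.2 t)
            = dotp (v.1 + v.2) t * dotp (w.1 + w.2) t := by
          intro t _
          rw [dotp_add_left, dotp_add_left]
        rw [Finset.sum_congr rfl hfe, e2, add_zero]
      rw [hz, mul_zero]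
    · have hNpos : 1 ≤ N.card :=
        Finset.card_pos.mpr (Finset.nonempty_iff_ne_empty.mpr hN)
      have hdvd : 2 ∣ 2 ^ m - 2 ^ N.card :=
        Nat.dvd_sub (dvd_pow_self 2 (by omega)) (dvd_pow_self 2 (by omega))
      have hcast : ((((deltaC N)ᶜ).card : ℕ) : ZMod 2) = 0 := by
        rw [hK, ZMod.natCast_eq_zero_iff]
        exact hdvd
      rw [hcast, zero_mul]
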